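/- Suppose m ≥ 3 and λ_i = 1/m for every i ∈ I, and set α = m/(2m−2) and N = α^{-1}(R − (1−α)Id). Then N is a linear isometry of 𝐗 (that is, ‖Nx‖ = ‖x‖ for every x ∈ 𝐗); consequently R = (1−α)Id + αN is α-averaged with α = m/(2m−2) ∈ (0,1). -/

import Mathlib

open Finset

/-- For `m ≥ 3` and equal weights `λ i = 1/m`, setting
`α = m/(2m−2)` and `N = α⁻¹ (R − (1−α) Id)`, the map `N` is an isometry of `X^m`
(with the Hilbert product norm); consequently `R = (1−α)Id + αN` is `α`-averaged
with `α ∈ (0,1)`. -/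
theorem R_averaged_of_equal_weights
    {X : Type*} [NormedAddCommGroup X] [InnerProductSpace ℝ X]
    (m : ℕ) (hm : 3 ≤ m)
    (R : PiLp 2 (fun _ : Fin m => X) → PiLp 2 (fun _ : Fin m => X))
    (hR : ∀ x i, R x i = ((m : ℝ) - 1)⁻¹ • ∑ j ∈ Finset.univ.erase i, x j)
    (α : ℝ) (hα : α = m / (2 * m - 2))
    (N : PiLp 2 (fun _ : Fin m => X) → PiLp 2 (fun _ : Fin m => X))
    (hN : ∀ x, N x = α⁻¹ • (R x - (1 - α) • x)) :
    (∀ x, ‖N x‖ = ‖x‖) ∧ 0 < α ∧ α < 1 ∧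
      (∀ x, R x = (1 - α) • x + α • N x) := by
  have hm3 : (3 : ℝ) ≤ (m : ℝ) := by exact_mod_cast hm
  have hm0 : (m : ℝ) ≠ 0 := by linarith
  have hm1 : (m : ℝ) - 1 ≠ 0 := by linarith
  have h2m2 : (2 : ℝ) * m - 2 ≠ 0 := by linarith
  have hαpos : 0 < α := by
    rw [hα]; apply div_pos <;> linarith
  have hα1 : α < 1 := by
    rw [hα, div_lt_one (by linarith)]; linarith
  have hα0 : α ≠ 0 := ne_of_gt hαpos
  -- key pointwise formula
  have hNi : ∀ (x : PiLp 2 (fun _ : Fin m => X)) (i : Fin m),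
      N x i = ((2 : ℝ) / m) • (∑ j, x j) - x i := by
    intro x i
    have hsum : ∑ j ∈ Finset.univ.erase i, x j = (∑ j, x j) - x i := by
      rw [Finset.sum_erase_eq_sub (Finset.mem_univ i)]
    have h1 : N x i = α⁻¹ • (R x i - (1 - α) • x i) := by
      rw [hN]
      rfl
    rw [h1, hR, hsum, hα]
    match_scalars <;> (field_simp; try ring)
  constructor
  · intro x
    set S : X := ∑ j, x j with hS
    have hsq : ‖N x‖ ^ 2 = ‖x‖ ^ 2 := by
      rw [← real_inner_self_eq_norm_sq, ← real_inner_self_eq_norm_sq]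
      rw [PiLp.inner_apply, PiLp.inner_apply]
      have expand : ∀ i : Fin m,
          (inner ℝ (N x i) (N x i) : ℝ)
            = ((2:ℝ) / m) * ((2:ℝ) / m) * inner ℝ S S
              - 2 * ((2:ℝ) / m) * inner ℝ S (x i) + inner ℝ (x i) (x i) := by
        intro i
        rw [hNi x i, ← hS]
        simp only [inner_sub_left, inner_sub_right, real_inner_smul_left,
          real_inner_smul_right, real_inner_comm (x i) S]
        ring
      calc ∑ i, (inner ℝ (N x i) (N x i) : ℝ)
          = ∑ i : Fin m, (((2:ℝ) / m) * ((2:ℝ) / m) * (inner ℝ S S : ℝ)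
              - 2 * ((2:ℝ) / m) * inner ℝ S (x i) + inner ℝ (x i) (x i)) :=
            Finset.sum_congr rfl fun i _ => expand i
        _ = (m : ℝ) * (((2:ℝ) / m) * ((2:ℝ) / m) * inner ℝ S S)
              - 2 * ((2:ℝ) / m) * (inner ℝ S S : ℝ)
              + ∑ i, (inner ℝ (x i) (x i) : ℝ) := by
            rw [Finset.sum_add_distrib, Finset.sum_sub_distrib,
              Finset.sum_const, Finset.card_univ, Fintype.card_fin,
              nsmul_eq_mul, ← Finset.mul_sum, ← inner_sum]
        _ = ∑ i, (inner ℝ (x i) (x i) : ℝ) := by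
            field_simp
            ring
    have := congrArg Real.sqrt hsq
    rwa [Real.sqrt_sq (norm_nonneg _), Real.sqrt_sq (norm_nonneg _)] at this
  refine ⟨hαpos, hα1, ?_⟩
  intro x
  rw [hN, smul_smul, mul_inv_cancel₀ hα0, one_smul]
  abel
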